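/- Let n ≥ 1 and let a, x ∈ A_n be doubly pure. Then a·x − x̃·ã = 0 if and only if ⟨ã, x⟩ = 0. -/

import Mathlib

noncomputable section

open scoped Quaternion

/-- The Cayley–Dickson algebra `A n = ℝ^(2^n)` as a type. -/
def CD : ℕ → Type
  | 0 => ℝ
  | n + 1 => CD n × CD n

namespace CD

instance instAddCommGroup : (n : ℕ) → AddCommGroup (CD n)
  | 0 => inferInstanceAs (AddCommGroup ℝ)
  | n + 1 =>
    letI := instAddCommGroup n
    inferInstanceAs (AddCommGroup (CD n × CD n))

instance instModule : (n : ℕ) → Module ℝ (CD n)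
  | 0 => inferInstanceAs (Module ℝ ℝ)
  | n + 1 =>
    letI := instModule n
    inferInstanceAs (Module ℝ (CD n × CD n))

/-- Conjugation in the Cayley–Dickson algebra. -/
def conj : {n : ℕ} → CD n → CD n
  | 0, x => x
  | _ + 1, x => (conj x.1, -x.2)

/-- Cayley–Dickson multiplication. -/
def mul : {n : ℕ} → CD n → CD n → CD n
  | 0, x, y => Mul.mul (α := ℝ) x y
  | _ + 1, x, y =>
    (mul x.1 y.1 - mul (conj y.2) x.2, mul y.2 x.1 + mul x.2 (conj y.1))

instance instMul (n : ℕ) : Mul (CD n) := ⟨mul⟩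

/-- The multiplicative unit `e₀`. -/
def one : {n : ℕ} → CD n
  | 0 => (1 : ℝ)
  | _ + 1 => (one, 0)

instance instOne (n : ℕ) : One (CD n) := ⟨one⟩

/-- The Euclidean inner product on `A n = ℝ^(2^n)`. -/
def inner : {n : ℕ} → CD n → CD n → ℝ
  | 0, x, y => (x * y : ℝ)
  | _ + 1, x, y => inner x.1 y.1 + inner x.2 y.2

/-- The Euclidean norm on `A n = ℝ^(2^n)`. -/
def norm {n : ℕ} (x : CD n) : ℝ := Real.sqrt (inner x x)

/-- `ã = (-a₂, a₁)`. -/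
def tilde {n : ℕ} (a : CD (n + 1)) : CD (n + 1) := (-a.2, a.1)

/-- `ẽ₀ = (0, e₀)`. -/
def etilde (n : ℕ) : CD (n + 1) := ((0 : CD n), (1 : CD n))

/-- An element is pure if its conjugate is its negative. -/
def IsPure {n : ℕ} (a : CD n) : Prop := conj a = -a

/-- An element of `A (n+1)` is doubly pure if both of its coordinates are pure. -/
def IsDoublyPure {n : ℕ} (a : CD (n + 1)) : Prop := IsPure a.1 ∧ IsPure a.2

/-- The associator `(a,b,c) = (ab)c - a(bc)`. -/
def assoc {n : ℕ} (a b c : CD n) : CD n := a * b * c - a * (b * c)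

/-- An element is alternative if `(a,a,x) = 0` for all `x`. -/
def IsAlternative {n : ℕ} (a : CD n) : Prop := ∀ x : CD n, assoc a a x = 0

/-- An element is strongly alternative if `(a,a,x) = 0` and `(a,x,x) = 0` for all `x`. -/
def IsStronglyAlternative {n : ℕ} (a : CD n) : Prop :=
  (∀ x : CD n, assoc a a x = 0) ∧ (∀ x : CD n, assoc a x x = 0)

/-- The pure (imaginary) part of an element. -/
def im {n : ℕ} (a : CD n) : CD n := (2⁻¹ : ℝ) • (a - conj a)

/-- `H a`, the span of `{e₀, ã, a, ẽ₀}`. -/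
def H {n : ℕ} (a : CD (n + 1)) : Submodule ℝ (CD (n + 1)) :=
  Submodule.span ℝ {(1 : CD (n + 1)), tilde a, a, etilde n}

/-- The orthogonal complement of `H a`. -/
def Hperp {n : ℕ} (a : CD (n + 1)) : Set (CD (n + 1)) :=
  {x | ∀ y ∈ H a, inner y x = 0}

end CD

namespace CD

lemma mul_def {n : ℕ} (x y : CD (n + 1)) :
    x * y = (x.1 * y.1 - conj y.2 * x.2, y.2 * x.1 + x.2 * conj y.1) := rfl

lemma conj_def {n : ℕ} (x : CD (n + 1)) : conj x = (conj x.1, -x.2) := rfl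

lemma one_def {n : ℕ} : (1 : CD (n + 1)) = ((1 : CD n), (0 : CD n)) := rfl

lemma add_def {n : ℕ} (x y : CD (n + 1)) : x + y = (x.1 + y.1, x.2 + y.2) := rfl
lemma neg_def {n : ℕ} (x : CD (n + 1)) : -x = (-x.1, -x.2) := rfl
lemma sub_def {n : ℕ} (x y : CD (n + 1)) : x - y = (x.1 - y.1, x.2 - y.2) := rfl
lemma zero_def {n : ℕ} : (0 : CD (n + 1)) = ((0 : CD n), (0 : CD n)) := rfl
lemma smul_def {n : ℕ} (c : ℝ) (x : CD (n + 1)) : c • x = (c • x.1, c • x.2) := rfl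

lemma conj_neg : ∀ {n : ℕ} (x : CD n), conj (-x) = -conj x
  | 0, x => rfl
  | n + 1, x => by
    rw [conj_def, conj_def, neg_def x, neg_def (conj x.1, -x.2)]
    dsimp only
    rw [conj_neg x.1]

lemma neg_mul_both : ∀ {n : ℕ},
    (∀ x y : CD n, (-x) * y = -(x * y)) ∧ (∀ x y : CD n, x * (-y) = -(x * y))
  | 0 =>
    ⟨fun x y => (fun (x' y' : ℝ) => neg_mul x' y') x y,
     fun x y => (fun (x' y' : ℝ) => mul_neg x' y') x y⟩
  | n + 1 => by
    obtain ⟨ihl, ihr⟩ := neg_mul_both (n := n)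
    constructor
    · intro x y
      rw [mul_def, mul_def, neg_def x, neg_def (x.1 * y.1 - conj y.2 * x.2,
        y.2 * x.1 + x.2 * conj y.1)]
      dsimp only
      rw [ihl x.1 y.1, ihr (conj y.2) x.2, ihl x.2 (conj y.1), ihr y.2 x.1]
      exact congrArg₂ Prod.mk (by abel) (by abel)
    · intro x y
      rw [mul_def, mul_def, neg_def y, neg_def (x.1 * y.1 - conj y.2 * x.2,
        y.2 * x.1 + x.2 * conj y.1)]
      dsimp only
      rw [conj_neg y.2, conj_neg y.1, ihl (conj y.2) x.2, ihr x.1 y.1,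
        ihl y.2 x.1, ihr x.2 (conj y.1)]
      exact congrArg₂ Prod.mk (by abel) (by abel)

lemma neg_mul' {n : ℕ} (x y : CD n) : (-x) * y = -(x * y) := neg_mul_both.1 x y
lemma mul_neg' {n : ℕ} (x y : CD n) : x * (-y) = -(x * y) := neg_mul_both.2 x y

lemma inner_def {n : ℕ} (x y : CD (n + 1)) : inner x y = inner x.1 y.1 + inner x.2 y.2 := rfl

lemma inner_neg_left : ∀ {n : ℕ} (x y : CD n), inner (-x) y = -inner x y
  | 0, x, y => (fun (x' y' : ℝ) => neg_mul x' y') x y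
  | n + 1, x, y => by
    rw [inner_def, inner_def, neg_def x]
    dsimp only
    rw [inner_neg_left x.1 y.1, inner_neg_left x.2 y.2]
    ring

lemma inner_comm : ∀ {n : ℕ} (x y : CD n), inner x y = inner y x
  | 0, x, y => (fun (x' y' : ℝ) => mul_comm x' y') x y
  | n + 1, x, y => by
    rw [inner_def, inner_def, inner_comm x.1 y.1, inner_comm x.2 y.2]

lemma one_ne_zero' : ∀ {n : ℕ}, (1 : CD n) ≠ 0
  | 0 => (one_ne_zero : (1 : ℝ) ≠ 0)
  | n + 1 => by
    rw [one_def, zero_def]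
    intro h
    exact one_ne_zero' (congrArg Prod.fst h)

lemma smul_one_eq_zero_iff {n : ℕ} (c : ℝ) : c • (1 : CD n) = 0 ↔ c = 0 := by
  constructor
  · intro h
    by_contra hc
    have : (1 : CD n) = 0 := by
      calc (1 : CD n) = c⁻¹ • (c • (1 : CD n)) := by rw [smul_smul, inv_mul_cancel₀ hc, one_smul]
      _ = 0 := by rw [h, smul_zero]
    exact one_ne_zero' this
  · intro h; rw [h, zero_smul]

/-- Key polarization identity: `conj u * v + conj v * u = 2⟨u,v⟩ • 1`. -/
lemma conj_mul_add : ∀ {n : ℕ} (u v : CD n),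
    conj u * v + conj v * u = (2 * inner u v) • (1 : CD n)
  | 0, u, v =>
    (fun (u' v' : ℝ) => (by ring : u' * v' + v' * u' = (2 * (u' * v')) * 1)) u v
  | n + 1, u, v => by
    have h1 := conj_mul_add u.1 v.1
    have h2 := conj_mul_add u.2 v.2
    rw [add_def (conj u * v) (conj v * u), mul_def (conj u) v, mul_def (conj v) u, conj_def u, conj_def v]
    dsimp only
    rw [inner_def, smul_def (2 * (inner u.1 v.1 + inner u.2 v.2)) (1 : CD (n + 1)), one_def]
    dsimp only
    rw [mul_neg' (conj v.2) u.2, mul_neg' (conj u.2) v.2, neg_mul' u.2 (conj v.1),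
      neg_mul' v.2 (conj u.1)]
    refine congrArg₂ Prod.mk ?_ ?_
    · have key : conj u.1 * v.1 + conj v.1 * u.1 + (conj u.2 * v.2 + conj v.2 * u.2)
          = (2 * (inner u.1 v.1 + inner u.2 v.2)) • (1 : CD n) := by
        rw [h1, h2, ← add_smul]; ring_nf
      calc conj u.1 * v.1 - -(conj v.2 * u.2) + (conj v.1 * u.1 - -(conj u.2 * v.2))
          = conj u.1 * v.1 + conj v.1 * u.1 + (conj u.2 * v.2 + conj v.2 * u.2) := by abel
        _ = _ := key
    · rw [smul_zero]; abel

/-- For pure `u, v`: `u*v + v*u = -(2⟨u,v⟩) • 1`. -/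
lemma pure_mul_add {n : ℕ} (u v : CD n) (hu : IsPure u) (hv : IsPure v) :
    u * v + v * u = (-(2 * inner u v)) • (1 : CD n) := by
  have h := conj_mul_add u v
  rw [hu, hv, neg_mul', neg_mul'] at h
  have h' : u * v + v * u = -((2 * inner u v) • (1 : CD n)) := by
    rw [← h]; abel
  rw [h', neg_smul]

end CD

/-- For doubly pure `a, x`, `a·x − x̃·ã = 0 ↔ ⟨ã, x⟩ = 0`. -/
theorem mul_sub_tilde_mul_tilde_eq_zero_iff_inner_tilde_eq_zero (n : ℕ) (a x : CD (n + 1))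
    (ha : CD.IsDoublyPure a) (hx : CD.IsDoublyPure x) :
    a * x - CD.tilde x * CD.tilde a = 0 ↔ CD.inner (CD.tilde a) x = 0 := by
  obtain ⟨ha1, ha2⟩ := ha
  obtain ⟨hx1, hx2⟩ := hx
  have hcval : CD.inner (CD.tilde a) x = CD.inner a.1 x.2 - CD.inner a.2 x.1 := by
    rw [CD.inner_def, show (CD.tilde a).1 = -a.2 from rfl, show (CD.tilde a).2 = a.1 from rfl,
      CD.inner_neg_left]
    ring
  have key : a * x - CD.tilde x * CD.tilde a
      = ((0 : CD n), (-(2 * CD.inner (CD.tilde a) x)) • (1 : CD n)) := by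
    rw [CD.sub_def (a * x) (CD.tilde x * CD.tilde a), CD.mul_def a x, CD.mul_def (CD.tilde x) (CD.tilde a),
      show (CD.tilde x).1 = -x.2 from rfl, show (CD.tilde x).2 = x.1 from rfl,
      show (CD.tilde a).1 = -a.2 from rfl, show (CD.tilde a).2 = a.1 from rfl,
      hx2, hx1, ha1, CD.conj_neg a.2, ha2, neg_neg,
      CD.neg_mul' x.2 a.2, CD.mul_neg' a.2 x.1,
      CD.neg_mul' x.2 (-a.2), CD.mul_neg' x.2 a.2, neg_neg,
      CD.neg_mul' a.1 x.1, CD.mul_neg' a.1 x.2]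
    dsimp only
    refine congrArg₂ Prod.mk ?_ ?_
    · abel
    · have e1 := CD.pure_mul_add x.2 a.1 hx2 ha1
      have e2 := CD.pure_mul_add a.2 x.1 ha2 hx1
      have hre : x.2 * a.1 + -(a.2 * x.1) - (-(a.1 * x.2) + x.1 * a.2)
          = (x.2 * a.1 + a.1 * x.2) - (a.2 * x.1 + x.1 * a.2) := by abel
      rw [hre, e1, e2, ← sub_smul]
      congr 1
      rw [hcval, CD.inner_comm x.2 a.1]
      ring
  rw [key]
  constructor
  · intro h
    have h2 : (-(2 * CD.inner (CD.tilde a) x)) • (1 : CD n) = 0 := congrArg Prod.snd h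
    rw [CD.smul_one_eq_zero_iff] at h2
    linarith
  · intro h
    rw [h, CD.zero_def]
    refine congrArg₂ Prod.mk rfl ?_
    norm_num
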